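/- There exist strictly increasing sequences of positive integers (α_n) and (β_n) satisfying α_n < 2α_n² < β_n < β_n² < α_{n+1} for all n, and ∑_{n=α_N}^∞ n^{1+n/2} · N^n / n! < 1/N for all N ∈ ℕ. -/

import Mathlib

private theorem fact_lb (n : ℕ) : ((n:ℝ)/4)^n ≤ n.factorial := by
  induction n with
  | zero => simp
  | succ n ih =>
    have h4 : (((n:ℝ)+1)/4)^n ≤ 4 * ((n:ℝ)/4)^n := by
      rcases Nat.eq_zero_or_pos n with h | h
      · simp [h]
      · have hn : (0:ℝ) < n := by positivity
        have h1 : ((n:ℝ)+1)/n ≤ Real.exp (1/n) := by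
          rw [add_div, div_self hn.ne']
          have := Real.add_one_le_exp (1/(n:ℝ))
          linarith
        have h2 : (((n:ℝ)+1)/n)^n ≤ (Real.exp (1/n))^n :=
          pow_le_pow_left₀ (by positivity) h1 n
        rw [← Real.exp_nat_mul] at h2
        have hh : (n:ℝ) * (1/n) = 1 := by field_simp
        rw [hh] at h2
        have he : Real.exp 1 ≤ 4 := by
          have := Real.exp_one_lt_d9; linarith
        have h3 : (((n:ℝ)+1)/n)^n ≤ 4 := le_trans h2 he
        have hdecomp : (((n:ℝ)+1)/4)^n = (((n:ℝ)+1)/n)^n * ((n:ℝ)/4)^n := by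
          rw [← mul_pow]; congr 1; field_simp
        rw [hdecomp]
        have hp : (0:ℝ) ≤ ((n:ℝ)/4)^n := by positivity
        nlinarith
    have hfact : ((n+1:ℕ).factorial : ℝ) = ((n:ℝ)+1) * n.factorial := by
      rw [Nat.factorial_succ]; push_cast; ring
    have hcast : (((n+1:ℕ):ℝ)/4)^(n+1) = (((n:ℝ)+1)/4) * (((n:ℝ)+1)/4)^n := by
      push_cast; ring
    rw [hfact, hcast]
    calc (((n:ℝ)+1)/4) * (((n:ℝ)+1)/4)^n
        ≤ (((n:ℝ)+1)/4) * (4 * ((n:ℝ)/4)^n) := by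
          apply mul_le_mul_of_nonneg_left h4 (by positivity)
      _ = ((n:ℝ)+1) * ((n:ℝ)/4)^n := by ring
      _ ≤ ((n:ℝ)+1) * n.factorial := by
          apply mul_le_mul_of_nonneg_left ih (by positivity)

private theorem key (N n : ℕ) (h : 256 * N^2 ≤ n) (hn1 : 1 ≤ n) :
    (n:ℝ) ^ (1 + (n:ℝ)/2) * (N:ℝ)^n / (n.factorial : ℝ) ≤ (1/2)^n := by
  have hn : (0:ℝ) < n := by exact_mod_cast hn1
  have hsq : 16 * (N:ℝ) ≤ Real.sqrt n := by
    rw [show (16:ℝ) * N = Real.sqrt ((16*N)^2) by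
      rw [Real.sqrt_sq (by positivity)]]
    apply Real.sqrt_le_sqrt
    have : ((16*N)^2 : ℝ) = 256 * N^2 := by ring
    rw [this]; exact_mod_cast h
  have hr : (n:ℝ) ^ (1 + (n:ℝ)/2) = (n:ℝ) * (Real.sqrt n)^n := by
    rw [Real.rpow_add hn, Real.rpow_one]
    congr 1
    rw [show ((n:ℝ)/2) = (1/2) * (n:ℕ) by ring,
      Real.rpow_mul hn.le, Real.rpow_natCast, ← Real.sqrt_eq_rpow]
  have hfp : (0:ℝ) < n.factorial := by exact_mod_cast n.factorial_pos
  rw [hr, div_le_iff₀ hfp]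
  have hbound : Real.sqrt n * N ≤ (n:ℝ)/16 := by
    have h1 : Real.sqrt n * N ≤ Real.sqrt n * (Real.sqrt n / 16) := by
      apply mul_le_mul_of_nonneg_left _ (Real.sqrt_nonneg _)
      linarith
    have h2 : Real.sqrt n * (Real.sqrt n / 16) = (n:ℝ)/16 := by
      rw [show Real.sqrt n * (Real.sqrt n / 16) = Real.sqrt n * Real.sqrt n / 16 by ring,
        Real.mul_self_sqrt hn.le]
    linarith
  have h2n : (n:ℝ) ≤ 2^n := by exact_mod_cast (Nat.lt_two_pow_self (n := n)).le
  calc (n:ℝ) * (Real.sqrt n)^n * (N:ℝ)^n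
      = (n:ℝ) * (Real.sqrt n * N)^n := by rw [mul_pow]; ring
    _ ≤ (n:ℝ) * ((n:ℝ)/16)^n := by
        apply mul_le_mul_of_nonneg_left _ hn.le
        exact pow_le_pow_left₀ (by positivity) hbound n
    _ = (n:ℝ) * ((1/4:ℝ)^n * ((n:ℝ)/4)^n) := by
        rw [← mul_pow]; congr 2; ring
    _ ≤ 2^n * ((1/4:ℝ)^n * ((n:ℝ)/4)^n) := by
        apply mul_le_mul_of_nonneg_right h2n (by positivity)
    _ = (1/2:ℝ)^n * ((n:ℝ)/4)^n := by
        rw [← mul_assoc, ← mul_pow]; norm_num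
    _ ≤ (1/2:ℝ)^n * n.factorial := by
        apply mul_le_mul_of_nonneg_left (fact_lb n) (by positivity)

private def Aseq : ℕ → ℕ
  | 0 => 1
  | n+1 => (2 * (Aseq n)^2 + 1)^2 + 256*(n+1)^2 + n + 4

private theorem Aseq_pos (n : ℕ) : 0 < Aseq n := by
  cases n with
  | zero => simp [Aseq]
  | succ n => simp [Aseq]

set_option maxRecDepth 8000 in
theorem stmt7 :
    ∃ α β : ℕ → ℕ,
      (∀ n : ℕ, 0 < α n) ∧
      (∀ n : ℕ, α n < 2 * (α n) ^ 2 ∧ 2 * (α n) ^ 2 < β n ∧ β n < (β n) ^ 2 ∧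
        (β n) ^ 2 < α (n + 1)) ∧
      (∀ N : ℕ, 1 ≤ N →
        ∑' n : ℕ, ((n + α N : ℕ) : ℝ) ^ (1 + ((n + α N : ℕ) : ℝ) / 2) * (N : ℝ) ^ (n + α N)
            / ((n + α N).factorial : ℝ) < 1 / N) := by
  refine ⟨Aseq, fun n => 2 * (Aseq n)^2 + 1, Aseq_pos, ?_, ?_⟩
  · intro n
    have ha := Aseq_pos n
    refine ⟨by nlinarith, by nlinarith, by nlinarith, ?_⟩
    show (2 * (Aseq n)^2 + 1)^2 < Aseq (n+1)
    simp [Aseq]; omega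
  · intro N hN
    obtain ⟨k, rfl⟩ : ∃ k, N = k + 1 := ⟨N - 1, by omega⟩
    set m := Aseq (k+1) with hm
    have hm1 : 256 * (k+1)^2 ≤ m := by simp [hm, Aseq]; omega
    have hm2 : (k+1) + 2 ≤ m := by simp [hm, Aseq]; omega
    -- pointwise bound
    have hle : ∀ n : ℕ,
        ((n + m : ℕ) : ℝ) ^ (1 + ((n + m : ℕ) : ℝ) / 2) * ((k+1 : ℕ) : ℝ) ^ (n + m)
          / ((n + m).factorial : ℝ) ≤ (1/2:ℝ)^(n+m) := by
      intro n
      apply key (k+1) (n+m) (le_trans hm1 (by omega)) (by omega)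
    have hnonneg : ∀ n : ℕ,
        (0:ℝ) ≤ ((n + m : ℕ) : ℝ) ^ (1 + ((n + m : ℕ) : ℝ) / 2) * ((k+1 : ℕ) : ℝ) ^ (n + m)
          / ((n + m).factorial : ℝ) := by
      intro n
      have h1 : (0:ℝ) ≤ ((n + m : ℕ) : ℝ) ^ (1 + ((n + m : ℕ) : ℝ) / 2) :=
        Real.rpow_nonneg (by positivity) _
      positivity
    have hgsum : Summable (fun n : ℕ => (1/2:ℝ)^(n+m)) := by
      simp_rw [pow_add]
      exact (summable_geometric_of_lt_one (by norm_num) (by norm_num)).mul_right _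
    have hfsum : Summable (fun n : ℕ =>
        ((n + m : ℕ) : ℝ) ^ (1 + ((n + m : ℕ) : ℝ) / 2) * ((k+1 : ℕ) : ℝ) ^ (n + m)
          / ((n + m).factorial : ℝ)) :=
      Summable.of_nonneg_of_le hnonneg hle hgsum
    have htsum_le := Summable.tsum_le_tsum hle hfsum hgsum
    have hgval : ∑' n : ℕ, (1/2:ℝ)^(n+m) = (1/2:ℝ)^m * 2 := by
      simp_rw [pow_add]
      rw [tsum_mul_right, tsum_geometric_of_lt_one (by norm_num) (by norm_num)]
      norm_num; ring
    have hfinal : (1/2:ℝ)^m * 2 < 1 / ((k+1:ℕ):ℝ) := by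
      have h2m : ((k+1:ℕ):ℝ) * 2 < 2^m := by
        have : (k+1) * 2 < 2^m := by
          calc (k+1) * 2 < 2^(k+1) * 2^2 := by
                have := Nat.lt_two_pow_self (n := k+1)
                nlinarith
            _ = 2^(k+3) := by ring
            _ ≤ 2^m := Nat.pow_le_pow_right (by norm_num) (by omega)
        exact_mod_cast this
      have h2mp : (0:ℝ) < 2^m := by positivity
      have hNp : (0:ℝ) < ((k+1:ℕ):ℝ) := by positivity
      rw [div_pow, one_pow, lt_div_iff₀ hNp]
      rw [div_mul_eq_mul_div, div_mul_eq_mul_div, div_lt_iff₀ h2mp]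
      nlinarith
    rw [hgval] at htsum_le
    exact lt_of_le_of_lt htsum_le hfinal
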